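/- Let λ₁, λ₂, λ₃ be real numbers with H = λ₁+λ₂+λ₃ and H − λᵢ > 0 for each i ∈ {1,2,3}, and let c₀ > 0 satisfy ((H − λᵢ)/(H − λⱼ))² ≤ c₀² for all i, j ∈ {1,2,3}. Let (h_{iik})_{i,k ∈ {1,2,3}} be real numbers satisfying, for each k ∈ {1,2,3}, the linear relation h_{11k}(H−λ₁) + h_{22k}(H−λ₂) + h_{33k}(H−λ₃) = 0. Then h_{111}² + h_{222}² + h_{333}² ≤ 2c₀²·(h_{112}² + h_{113}² + h_{221}² + h_{223}² + h_{331}² + h_{332}²). -/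

import Mathlib

lemma aux_bound (A B C x y z c : ℝ) (hA : 0 < A)
    (hB2 : (B / A) ^ 2 ≤ c ^ 2) (hC2 : (C / A) ^ 2 ≤ c ^ 2)
    (hrel : x * A + y * B + z * C = 0) :
    x ^ 2 ≤ 2 * c ^ 2 * (y ^ 2 + z ^ 2) := by
  have hA2 : (0:ℝ) < A ^ 2 := pow_pos hA 2
  have hB : B ^ 2 ≤ c ^ 2 * A ^ 2 := by
    rw [div_pow] at hB2
    exact (div_le_iff₀ hA2).mp hB2
  have hC : C ^ 2 ≤ c ^ 2 * A ^ 2 := by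
    rw [div_pow] at hC2
    exact (div_le_iff₀ hA2).mp hC2
  have key : x ^ 2 * A ^ 2 ≤ (2 * c ^ 2 * (y ^ 2 + z ^ 2)) * A ^ 2 := by
    have hx : x * A = -(y * B + z * C) := by linarith
    have hx2 : x ^ 2 * A ^ 2 = (y * B + z * C) ^ 2 := by
      rw [show x ^ 2 * A ^ 2 = (x * A) ^ 2 by ring, hx, neg_sq]
    nlinarith [sq_nonneg (y * B - z * C),
      mul_le_mul_of_nonneg_left hB (sq_nonneg y),
      mul_le_mul_of_nonneg_left hC (sq_nonneg z)]
  exact (mul_le_mul_iff_of_pos_right hA2).mp key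

/-- If `H − λᵢ > 0` for each `i`, `((H−λᵢ)/(H−λⱼ))² ≤ c₀²` for all `i, j`, and the
numbers `h i k` (representing `h_{iik}`) satisfy `∑ᵢ h i k (H − λᵢ) = 0` for each `k`,
then `h_{111}² + h_{222}² + h_{333}² ≤ 2c₀²(h_{112}² + h_{113}² + h_{221}² + h_{223}²
+ h_{331}² + h_{332}²)`. -/
theorem diagonal_derivatives_bound (l : Fin 3 → ℝ) (c₀ : ℝ) (hc₀ : 0 < c₀)
    (hpos : ∀ i : Fin 3, 0 < (l 0 + l 1 + l 2) - l i)
    (hquot : ∀ i j : Fin 3,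
      (((l 0 + l 1 + l 2) - l i) / ((l 0 + l 1 + l 2) - l j)) ^ 2 ≤ c₀ ^ 2)
    (h : Fin 3 → Fin 3 → ℝ)
    (hrel : ∀ k : Fin 3, ∑ i : Fin 3, h i k * ((l 0 + l 1 + l 2) - l i) = 0) :
    h 0 0 ^ 2 + h 1 1 ^ 2 + h 2 2 ^ 2 ≤
      2 * c₀ ^ 2 *
        (h 0 1 ^ 2 + h 0 2 ^ 2 + h 1 0 ^ 2 + h 1 2 ^ 2 + h 2 0 ^ 2 + h 2 1 ^ 2) := by
  have e0 := hrel 0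
  have e1 := hrel 1
  have e2 := hrel 2
  simp only [Fin.sum_univ_three] at e0 e1 e2
  have b0 := aux_bound _ _ _ _ _ _ _ (hpos 0) (hquot 1 0) (hquot 2 0) e0
  have b1 := aux_bound _ _ _ _ _ _ _ (hpos 1) (hquot 0 1) (hquot 2 1)
    (by linarith : h 1 1 * ((l 0 + l 1 + l 2) - l 1) + h 0 1 * ((l 0 + l 1 + l 2) - l 0)
      + h 2 1 * ((l 0 + l 1 + l 2) - l 2) = 0)
  have b2 := aux_bound _ _ _ _ _ _ _ (hpos 2) (hquot 0 2) (hquot 1 2)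
    (by linarith : h 2 2 * ((l 0 + l 1 + l 2) - l 2) + h 0 2 * ((l 0 + l 1 + l 2) - l 0)
      + h 1 2 * ((l 0 + l 1 + l 2) - l 1) = 0)
  nlinarith [b0, b1, b2]
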